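/- If X is uniformly distributed over the codeword set of an (n,k) MDS code over GF(q), then the average entropy function h = (h_1,...,h_n) of X, where h_m is the average of the joint entropies H(X_α) over all subsets α of {1,...,n} of size m, satisfies h_m = min(m,k)·log q for all m. -/

import Mathlib

open Finset Real

/-- Joint Shannon entropy (natural log) of the coordinates in `α` of the random
vector `X` defined on a finite sample space `Ω` with probability mass `p`. -/
noncomputable def jointEntropy {Ω E : Type*} [Fintype Ω] [Fintype E] [DecidableEq E] {n : ℕ}
    (p : Ω → ℝ) (X : Fin n → Ω → E) (α : Finset (Fin n)) : ℝ :=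
  ∑ y : α → E, Real.negMulLog (∑ ω ∈ univ.filter (fun ω => ∀ i : α, X i ω = y i), p ω)

lemma fiber_card_eq {n k : ℕ} {F : Type} [Fintype F] [DecidableEq F] (hkn : k ≤ n)
    (C : Finset (Fin n → F))
    (hMDS : ∀ β : Finset (Fin n), β.card = k → ∀ y : β → F,
      ∃! c, c ∈ C ∧ ∀ i : β, c i = y i) :
    ∀ d : ℕ, ∀ α : Finset (Fin n), α.card + d = k → ∀ y : α → F,
      (C.filter (fun c => ∀ i : α, c i = y i)).card = Fintype.card F ^ d := by
  intro d
  induction d with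
  | zero =>
      intro α hα y
      obtain ⟨c, hc, hu⟩ := hMDS α (by omega) y
      rw [pow_zero, Finset.card_eq_one]
      refine ⟨c, ?_⟩
      ext x
      simp only [Finset.mem_filter, Finset.mem_singleton]
      constructor
      · intro hx; exact hu x hx
      · rintro rfl; exact hc
  | succ d ih =>
      intro α hα y
      have hlt : α.card < n := by omega
      have hne : α ≠ univ := by
        intro h; rw [h, card_univ, Fintype.card_fin] at hlt; omega
      obtain ⟨j, hj⟩ : ∃ j, j ∉ α := by
        by_contra h; push_neg at h; exact hne (Finset.eq_univ_iff_forall.mpr h)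
      have hins : (insert j α).card = α.card + 1 := Finset.card_insert_of_notMem hj
      rw [Finset.card_eq_sum_card_fiberwise (f := fun c => c j) (t := univ)
        (fun x _ => mem_univ _)]
      have hterm : ∀ a : F,
          ((C.filter (fun c => ∀ i : α, c i = y i)).filter (fun c => c j = a)).card
            = Fintype.card F ^ d := by
        intro a
        rw [Finset.filter_filter]
        have h2 := ih (insert j α) (by omega)
          (fun i => if h : (i : Fin n) ∈ α then y ⟨i, h⟩ else a)
        rw [← h2]
        apply congrArg
        apply Finset.filter_congr
        intro c _
        constructor
        · rintro ⟨h1, h2⟩ i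
          by_cases hi : (i : Fin n) ∈ α
          · simp only [dif_pos hi]; exact h1 ⟨i, hi⟩
          · simp only [dif_neg hi]
            have hij : (i : Fin n) = j := by
              rcases Finset.mem_insert.mp i.2 with h | h
              · exact h
              · exact absurd h hi
            rw [hij]; exact h2
        · intro h
          refine ⟨fun i => ?_, ?_⟩
          · have := h ⟨i, Finset.mem_insert_of_mem i.2⟩
            simpa [dif_pos i.2] using this
          · have := h ⟨j, Finset.mem_insert_self j α⟩
            simpa [dif_neg hj] using this
      rw [Finset.sum_congr rfl (fun a _ => hterm a)]
      simp [pow_succ, mul_comm]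

lemma fiber_card_le {n k : ℕ} {F : Type} [Fintype F] [DecidableEq F]
    (C : Finset (Fin n → F))
    (hMDS : ∀ β : Finset (Fin n), β.card = k → ∀ y : β → F,
      ∃! c, c ∈ C ∧ ∀ i : β, c i = y i)
    (α : Finset (Fin n)) (hα : k ≤ α.card) (y : α → F) :
    (C.filter (fun c => ∀ i : α, c i = y i)).card ≤ 1 := by
  obtain ⟨β, hβα, hβ⟩ := Finset.exists_subset_card_eq hα
  rw [Finset.card_le_one]
  intro c₁ h₁ c₂ h₂
  rw [Finset.mem_filter] at h₁ h₂
  obtain ⟨c, hc, hu⟩ := hMDS β hβ (fun i => y ⟨i, hβα i.2⟩)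
  have e1 : c₁ = c := hu c₁ ⟨h₁.1, fun i => h₁.2 ⟨i, hβα i.2⟩⟩
  have e2 : c₂ = c := hu c₂ ⟨h₂.1, fun i => h₂.2 ⟨i, hβα i.2⟩⟩
  rw [e1, e2]

/-- If `X` is uniform on an `(n,k)` MDS code over `GF(q)`, then its average
entropy function satisfies `h_m = min(m,k) · log q` for all `m = 1,…,n`. -/
theorem mds_average_entropy (n k q : ℕ) (hk : 1 ≤ k) (hkn : k ≤ n)
    (hq : IsPrimePow q)
    (F : Type) [Field F] [Fintype F] [DecidableEq F] (hF : Fintype.card F = q)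
    (C : Finset (Fin n → F)) (hCcard : C.card = q ^ k)
    (hMDS : ∀ β : Finset (Fin n), β.card = k → ∀ y : β → F,
      ∃! c, c ∈ C ∧ ∀ i : β, c i = y i)
    (m : ℕ) (hm1 : 1 ≤ m) (hmn : m ≤ n) :
    ((n.choose m : ℝ))⁻¹ * ∑ α ∈ powersetCard m (univ : Finset (Fin n)),
        jointEntropy (fun c : Fin n → F => if c ∈ C then ((q : ℝ) ^ k)⁻¹ else 0)
          (fun i c => c i) α
      = (min m k : ℕ) * Real.log q := by
  have hq2 : 2 ≤ q := hq.two_le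
  have hqR : (0:ℝ) < (q:ℝ) := by exact_mod_cast Nat.lt_of_lt_of_le (by norm_num) hq2
  have hqne : (q:ℝ) ≠ 0 := ne_of_gt hqR
  set r := min m k with hr
  clear_value r
  have hrk : r ≤ k := hr ▸ min_le_right _ _
  have key : ∀ α ∈ powersetCard m (univ : Finset (Fin n)),
      jointEntropy (fun c : Fin n → F => if c ∈ C then ((q : ℝ) ^ k)⁻¹ else 0)
        (fun i c => c i) α = (r : ℝ) * Real.log q := by
    intro α hα
    have hαm : α.card = m := (Finset.mem_powersetCard.mp hα).2
    have hN : ∀ y : α → F,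
        (C.filter (fun c => ∀ i : α, c i = y i)).card = 0 ∨
        (C.filter (fun c => ∀ i : α, c i = y i)).card = q ^ (k - r) := by
      intro y
      rcases le_or_gt m k with h | h
      · right
        have h2 := fiber_card_eq hkn C hMDS (k - m) α (by omega) y
        rw [h2, hF]
        have heq : k - m = k - r := by clear * - hr h; omega
        rw [heq]
      · have h2 := fiber_card_le C hMDS α (by omega) y
        rcases Nat.le_one_iff_eq_zero_or_eq_one.mp h2 with h0 | h1
        · left; exact h0
        · right
          have hrK : k - r = 0 := by clear * - hr h; omega
          rw [h1, hrK, pow_zero]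
    have hsum : ∑ y : α → F,
        ((C.filter (fun c => ∀ i : α, c i = y i)).card : ℝ) = (q:ℝ)^k := by
      have h1 : C.card = ∑ y : α → F,
          (C.filter (fun c => (fun i : α => c i) = y)).card :=
        Finset.card_eq_sum_card_fiberwise (fun c _ => mem_univ _)
      simp only [funext_iff] at h1
      rw [← Nat.cast_sum, ← h1, hCcard]
      push_cast
      ring
    unfold jointEntropy
    have hinner : ∀ y : α → F,
        (∑ ω ∈ univ.filter (fun ω : Fin n → F => ∀ i : α, ω i = y i),
          (if ω ∈ C then ((q:ℝ)^k)⁻¹ else 0))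
        = ((C.filter (fun c => ∀ i : α, c i = y i)).card : ℝ) * ((q:ℝ)^k)⁻¹ := by
      intro y
      rw [← Finset.sum_filter, Finset.filter_filter, Finset.sum_const, nsmul_eq_mul]
      have hfe : univ.filter (fun a : Fin n → F => (∀ i : α, a i = y i) ∧ a ∈ C)
          = C.filter (fun c => ∀ i : α, c i = y i) := by
        ext x
        simp [and_comm]
      rw [hfe]
    have hterm : ∀ y : α → F,
        Real.negMulLog (((C.filter (fun c => ∀ i : α, c i = y i)).card : ℝ) * ((q:ℝ)^k)⁻¹)
          = (((C.filter (fun c => ∀ i : α, c i = y i)).card : ℝ) * ((q:ℝ)^k)⁻¹)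
            * ((r:ℝ) * Real.log q) := by
      intro y
      rcases hN y with h | h
      · rw [h]; simp [Real.negMulLog]
      · rw [h]
        have hx : ((q:ℝ)^(k-r)) * ((q:ℝ)^k)⁻¹ = ((q:ℝ)^r)⁻¹ := by
          have hk' : (q:ℝ)^k = (q:ℝ)^(k-r) * (q:ℝ)^r := by
            rw [← pow_add]
            congr 1
            clear * - hrk
            omega
          rw [hk', mul_inv, ← mul_assoc, mul_inv_cancel₀ (pow_ne_zero _ hqne), one_mul]
        push_cast
        rw [hx]
        rw [Real.negMulLog, Real.log_inv, Real.log_pow]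
        ring
    calc ∑ y : α → F, Real.negMulLog (∑ ω ∈ univ.filter
            (fun ω : Fin n → F => ∀ i : α, ω i = y i),
            (if ω ∈ C then ((q:ℝ)^k)⁻¹ else 0))
        = ∑ y : α → F, (((C.filter (fun c => ∀ i : α, c i = y i)).card : ℝ)
            * ((q:ℝ)^k)⁻¹) * ((r:ℝ) * Real.log q) := by
          refine Finset.sum_congr rfl fun y _ => ?_
          rw [hinner y, hterm y]
      _ = (∑ y : α → F, ((C.filter (fun c => ∀ i : α, c i = y i)).card : ℝ))
            * ((q:ℝ)^k)⁻¹ * ((r:ℝ) * Real.log q) := by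
          rw [Finset.sum_mul, Finset.sum_mul]
      _ = (r : ℝ) * Real.log q := by
          rw [hsum, mul_inv_cancel₀ (pow_ne_zero _ hqne), one_mul]
  rw [Finset.sum_congr rfl key, Finset.sum_const, Finset.card_powersetCard, card_univ,
    Fintype.card_fin, nsmul_eq_mul, ← mul_assoc,
    inv_mul_cancel₀ (by exact_mod_cast (Nat.choose_pos hmn).ne' : (n.choose m : ℝ) ≠ 0), one_mul]
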